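/- Let d ≥ 1, let α ∈ [0, 1/2) and ε ∈ (0, 1). Let X̃ and X* be finite nonempty subsets of ℝ^d, let T = X̃ ∩ X*, and assume |T| ≥ (1 − α)·max(|X̃|, |X*|). Let m ∈ ℝ^d be a geometric median of T and let c* ∈ ℝ^d be a geometric median of X*. Let C be a finite nonempty set of points of ℝ^d containing some point q with ‖q − m‖₂ ≤ α·ε·Cost(T, m)/|T|. For each c ∈ C let N(c) ⊆ X̃ be a set of ⌈(1 − α)|X̃|⌉ points of X̃ closest to c (i.e., ‖x − c‖₂ ≤ ‖y − c‖₂ for every x ∈ N(c) and y ∈ X̃ \ N(c)), and let ĉ ∈ C be a minimizer over c ∈ C of Cost(N(c), c). Then Cost(X*, ĉ) ≤ (1 + (6α − 4α² + εα)/((1 − α)(1 − 2α))) · Cost(X*, c*). -/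

import Mathlib

open Finset
open scoped Classical

noncomputable def Cost {d : ℕ} (P : Finset (EuclideanSpace ℝ (Fin d)))
    (c : EuclideanSpace ℝ (Fin d)) : ℝ :=
  ∑ p ∈ P, ‖p - c‖

lemma cost_nonneg {d : ℕ} (P : Finset (EuclideanSpace ℝ (Fin d)))
    (c : EuclideanSpace ℝ (Fin d)) : 0 ≤ Cost P c :=
  Finset.sum_nonneg fun _ _ => norm_nonneg _

lemma cost_mono {d : ℕ} {S P : Finset (EuclideanSpace ℝ (Fin d))} (h : S ⊆ P)
    (c : EuclideanSpace ℝ (Fin d)) : Cost S c ≤ Cost P c :=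
  Finset.sum_le_sum_of_subset_of_nonneg h fun _ _ _ => norm_nonneg _

lemma cost_split {d : ℕ} (P Q : Finset (EuclideanSpace ℝ (Fin d)))
    (c : EuclideanSpace ℝ (Fin d)) : Cost P c = Cost (P ∩ Q) c + Cost (P \ Q) c :=
  (Finset.sum_inter_add_sum_sdiff P Q _).symm

lemma cost_shift {d : ℕ} (P : Finset (EuclideanSpace ℝ (Fin d)))
    (c c' : EuclideanSpace ℝ (Fin d)) :
    Cost P c ≤ Cost P c' + (P.card : ℝ) * ‖c' - c‖ := by
  have h : ∀ p ∈ P, ‖p - c‖ ≤ ‖p - c'‖ + ‖c' - c‖ := by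
    intro p _
    have : p - c = (p - c') + (c' - c) := by abel
    rw [this]
    exact norm_add_le _ _
  calc Cost P c ≤ ∑ p ∈ P, (‖p - c'‖ + ‖c' - c‖) := Finset.sum_le_sum h
    _ = Cost P c' + (P.card : ℝ) * ‖c' - c‖ := by
        rw [Finset.sum_add_distrib, Finset.sum_const, nsmul_eq_mul]; rfl

lemma card_mul_dist_le {d : ℕ} (P : Finset (EuclideanSpace ℝ (Fin d)))
    (a b : EuclideanSpace ℝ (Fin d)) :
    (P.card : ℝ) * ‖a - b‖ ≤ Cost P a + Cost P b := by
  have h : ∀ p ∈ P, ‖a - b‖ ≤ ‖p - a‖ + ‖p - b‖ := by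
    intro p _
    have : a - b = (p - b) - (p - a) := by abel
    rw [this]
    calc ‖(p - b) - (p - a)‖ ≤ ‖p - b‖ + ‖p - a‖ := norm_sub_le _ _
      _ = ‖p - a‖ + ‖p - b‖ := by ring
  calc (P.card : ℝ) * ‖a - b‖ = ∑ _p ∈ P, ‖a - b‖ := by
        rw [Finset.sum_const, nsmul_eq_mul]
    _ ≤ ∑ p ∈ P, (‖p - a‖ + ‖p - b‖) := Finset.sum_le_sum h
    _ = Cost P a + Cost P b := by rw [Finset.sum_add_distrib]; rfl

lemma sum_le_sum_of_card_eq {β : Type*} [DecidableEq β] {A B : Finset β} {f : β → ℝ}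
    (hcard : A.card = B.card)
    (h : ∀ a ∈ A, ∀ b ∈ B, f a ≤ f b) : ∑ a ∈ A, f a ≤ ∑ b ∈ B, f b := by
  rcases B.eq_empty_or_nonempty with rfl | hB
  · have : A = ∅ := Finset.card_eq_zero.mp (by simpa using hcard)
    simp [this]
  · obtain ⟨b₀, hb₀, hmin⟩ := B.exists_min_image f hB
    calc ∑ a ∈ A, f a ≤ ∑ _a ∈ A, f b₀ := Finset.sum_le_sum fun a ha => h a ha b₀ hb₀
      _ = A.card • f b₀ := Finset.sum_const _
      _ = B.card • f b₀ := by rw [hcard]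
      _ ≤ ∑ b ∈ B, f b := Finset.card_nsmul_le_sum B f _ fun b hb => hmin b hb

/-- If `Nq` consists of points of `X` closest to `c`, then its cost is at most that of
any subset of `X` of equal cardinality. -/
lemma cost_closest {d : ℕ} {X Nq S : Finset (EuclideanSpace ℝ (Fin d))}
    {c : EuclideanSpace ℝ (Fin d)}
    (hS : S ⊆ X) (hcard : S.card = Nq.card)
    (hnear : ∀ x ∈ Nq, ∀ y ∈ X \ Nq, ‖x - c‖ ≤ ‖y - c‖) :
    Cost Nq c ≤ Cost S c := by
  rw [cost_split Nq S, cost_split S Nq, Finset.inter_comm S Nq]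
  refine add_le_add le_rfl ?_
  apply sum_le_sum_of_card_eq
  · have h1 := Finset.card_sdiff_add_card_inter Nq S
    have h2 := Finset.card_sdiff_add_card_inter S Nq
    rw [Finset.inter_comm S Nq] at h2
    omega
  · intro a ha b hb
    rw [Finset.mem_sdiff] at ha hb
    exact hnear a ha.1 b (Finset.mem_sdiff.mpr ⟨hS hb.1, hb.2⟩)

set_option maxHeartbeats 1600000 in
theorem stmt0 (d : ℕ) (hd : 1 ≤ d) (α ε : ℝ)
    (hα0 : 0 ≤ α) (hα : α < 1/2) (hε0 : 0 < ε) (hε1 : ε < 1)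
    (Xt Xs : Finset (EuclideanSpace ℝ (Fin d)))
    (hXt : Xt.Nonempty) (hXs : Xs.Nonempty)
    (T : Finset (EuclideanSpace ℝ (Fin d))) (hTdef : T = Xt ∩ Xs)
    (hTsize : (1 - α) * max (Xt.card : ℝ) (Xs.card : ℝ) ≤ (T.card : ℝ))
    (m cstar : EuclideanSpace ℝ (Fin d))
    (hm : ∀ y, Cost T m ≤ Cost T y)
    (hcstar : ∀ y, Cost Xs cstar ≤ Cost Xs y)
    (C : Finset (EuclideanSpace ℝ (Fin d))) (hC : C.Nonempty)
    (q : EuclideanSpace ℝ (Fin d)) (hqC : q ∈ C)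
    (hq : ‖q - m‖ ≤ α * ε * Cost T m / (T.card : ℝ))
    (N : EuclideanSpace ℝ (Fin d) → Finset (EuclideanSpace ℝ (Fin d)))
    (hNsub : ∀ c ∈ C, N c ⊆ Xt)
    (hNcard : ∀ c ∈ C, (N c).card = ⌈(1 - α) * (Xt.card : ℝ)⌉₊)
    (hNnear : ∀ c ∈ C, ∀ x ∈ N c, ∀ y ∈ Xt \ N c, ‖x - c‖ ≤ ‖y - c‖)
    (chat : EuclideanSpace ℝ (Fin d)) (hchatC : chat ∈ C)
    (hchat : ∀ c ∈ C, Cost (N chat) chat ≤ Cost (N c) c) :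
    Cost Xs chat ≤
      (1 + (6 * α - 4 * α ^ 2 + ε * α) / ((1 - α) * (1 - 2 * α))) * Cost Xs cstar := by
  classical
  have hα1 : (0:ℝ) < 1 - α := by linarith
  have hα2 : (0:ℝ) < 1 - 2 * α := by linarith
  have hTXt : T ⊆ Xt := hTdef ▸ Finset.inter_subset_left
  have hTXs : T ⊆ Xs := hTdef ▸ Finset.inter_subset_right
  have hNcXt : N chat ⊆ Xt := hNsub chat hchatC
  have hNqXt : N q ⊆ Xt := hNsub q hqC
  -- cardinality facts (real)
  have hn1 : (1:ℝ) ≤ (Xt.card : ℝ) := by exact_mod_cast hXt.card_pos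
  have hτn : (T.card : ℝ) ≤ (Xt.card : ℝ) := by exact_mod_cast Finset.card_le_card hTXt
  have hτns : (T.card : ℝ) ≤ (Xs.card : ℝ) := by exact_mod_cast Finset.card_le_card hTXs
  have hτ1 : (1 - α) * (Xt.card : ℝ) ≤ (T.card : ℝ) :=
    le_trans (mul_le_mul_of_nonneg_left (le_max_left _ _) hα1.le) hTsize
  have hτ2 : (1 - α) * (Xs.card : ℝ) ≤ (T.card : ℝ) :=
    le_trans (mul_le_mul_of_nonneg_left (le_max_right _ _) hα1.le) hTsize
  have hτpos : (0:ℝ) < (T.card : ℝ) := by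
    have h := mul_le_mul_of_nonneg_left hn1 hα1.le
    linarith only [hτ1, h, hα1]
  have hνcard : (N chat).card = ⌈(1 - α) * (Xt.card : ℝ)⌉₊ := hNcard chat hchatC
  have hνqcard : (N q).card = (N chat).card := by rw [hNcard q hqC, hνcard]
  have hν_le_T : (N chat).card ≤ T.card := by
    rw [hνcard]
    exact Nat.ceil_le.mpr hτ1
  have hν_ge : (1 - α) * (Xt.card : ℝ) ≤ ((N chat).card : ℝ) := by
    rw [hνcard]; exact Nat.le_ceil _
  have hν_le_T' : ((N chat).card : ℝ) ≤ (T.card : ℝ) := by exact_mod_cast hν_le_T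
  -- intersection cardinality
  have hcut : T.card + (N chat).card ≤ Xt.card + (T ∩ N chat).card := by
    have h1 := Finset.card_inter_add_card_union T (N chat)
    have h2 : (T ∪ N chat).card ≤ Xt.card :=
      Finset.card_le_card (Finset.union_subset hTXt hNcXt)
    omega
  have hcut' : (T.card : ℝ) + ((N chat).card : ℝ) ≤ (Xt.card : ℝ) + ((T ∩ N chat).card : ℝ) := by
    exact_mod_cast hcut
  have hI : (1 - 2 * α) * (Xt.card : ℝ) ≤ ((T ∩ N chat).card : ℝ) := by
    linarith only [hcut', hτ1, hν_ge]
  have ht_nat := Finset.card_sdiff_add_card_inter T (N chat)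
  have hk_nat := Finset.card_sdiff_add_card_inter (N chat) T
  have hNT_comm : ((N chat) ∩ T).card = (T ∩ N chat).card := by rw [Finset.inter_comm]
  have ht : ((T \ N chat).card : ℝ) ≤ α * (Xt.card : ℝ) := by
    have h1 : ((T \ N chat).card : ℝ) + ((T ∩ N chat).card : ℝ) = (T.card : ℝ) := by
      exact_mod_cast ht_nat
    linarith only [h1, hcut', hν_ge]
  have hk : (((N chat) \ T).card : ℝ) ≤ α * (Xt.card : ℝ) := by
    have h1 : (((N chat) \ T).card : ℝ) + ((T ∩ N chat).card : ℝ) = ((N chat).card : ℝ) := by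
      rw [← hNT_comm] at *
      exact_mod_cast hk_nat
    linarith only [h1, hcut', hτ1]
  -- basic cost facts
  have hBmB : Cost T m ≤ Cost T cstar := hm cstar
  have hBO : Cost T cstar ≤ Cost Xs cstar := cost_mono hTXs cstar
  have hBm0 : 0 ≤ Cost T m := cost_nonneg _ _
  have hq' : (T.card : ℝ) * ‖q - m‖ ≤ α * ε * Cost T m := by
    have h := (le_div_iff₀ hτpos).mp hq
    linarith only [h]
  have hqm_rev : ‖m - q‖ = ‖q - m‖ := norm_sub_rev m q
  -- Step: Cost (N q) q ≤ (1 + αε) Cost T m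
  obtain ⟨S₀, hS₀T, hS₀card⟩ := Finset.exists_subset_card_eq hν_le_T
  have step3 : Cost (N q) q ≤ Cost T m + α * ε * Cost T m := by
    have h1 : Cost (N q) q ≤ Cost S₀ q :=
      cost_closest (hS₀T.trans hTXt) (by rw [hS₀card, hνqcard]) (hNnear q hqC)
    have h2 : Cost S₀ q ≤ Cost S₀ m + (S₀.card : ℝ) * ‖m - q‖ := cost_shift S₀ q m
    have h3 : Cost S₀ m ≤ Cost T m := cost_mono hS₀T m
    have h4 : (S₀.card : ℝ) * ‖m - q‖ ≤ α * ε * Cost T m := by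
      rw [hqm_rev]
      refine le_trans (mul_le_mul_of_nonneg_right ?_ (norm_nonneg _)) hq'
      rw [hS₀card]; exact hν_le_T'
    linarith only [h1, h2, h3, h4]
  have hNcc : Cost (N chat) chat ≤ Cost T m + α * ε * Cost T m :=
    (hchat q hqC).trans step3
  -- distance bounds via averaging over T ∩ N chat
  have hu0 : (0:ℝ) ≤ ‖m - chat‖ := norm_nonneg _
  have hv0 : (0:ℝ) ≤ ‖cstar - chat‖ := norm_nonneg _
  have hTNm : Cost (T ∩ N chat) m ≤ Cost T m := cost_mono Finset.inter_subset_left m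
  have hTNcs : Cost (T ∩ N chat) cstar ≤ Cost T cstar := cost_mono Finset.inter_subset_left cstar
  have hTNchat : Cost (T ∩ N chat) chat ≤ Cost (N chat) chat :=
    cost_mono Finset.inter_subset_right chat
  have hδm : (1 - 2 * α) * (Xt.card : ℝ) * ‖m - chat‖ ≤ (2 + α * ε) * Cost T m := by
    have h1 := card_mul_dist_le (T ∩ N chat) m chat
    have h2 : (1 - 2 * α) * (Xt.card : ℝ) * ‖m - chat‖ ≤
        ((T ∩ N chat).card : ℝ) * ‖m - chat‖ :=
      mul_le_mul_of_nonneg_right hI hu0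
    linarith only [h1, h2, hTNm, hTNchat, hNcc]
  have hδs : (1 - 2 * α) * (Xt.card : ℝ) * ‖cstar - chat‖ ≤ (2 + α * ε) * Cost T cstar := by
    have h1 := card_mul_dist_le (T ∩ N chat) cstar chat
    have h2 : (1 - 2 * α) * (Xt.card : ℝ) * ‖cstar - chat‖ ≤
        ((T ∩ N chat).card : ℝ) * ‖cstar - chat‖ :=
      mul_le_mul_of_nonneg_right hI hv0
    have h3 : α * ε * Cost T m ≤ α * ε * Cost T cstar :=
      mul_le_mul_of_nonneg_left hBmB (by positivity)
    linarith only [h1, h2, h3, hTNcs, hTNchat, hNcc, hBmB]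
  -- main chain: Cost T chat ≤ Cost T m + αε Cost T m + 2α n ‖m - chat‖
  have hTchat : Cost T chat ≤
      Cost T m + α * ε * Cost T m + 2 * α * (Xt.card : ℝ) * ‖m - chat‖ := by
    have m1 : Cost (N chat) chat ≤ Cost (N chat) q :=
      (hchat q hqC).trans
        (cost_closest (S := N chat) hNcXt hνqcard.symm (hNnear q hqC))
    have m2 : Cost (N chat) q =
        Cost ((N chat) ∩ T) q + Cost ((N chat) \ T) q := cost_split (N chat) T q
    have m3 : Cost ((N chat) ∩ T) q ≤
        Cost ((N chat) ∩ T) m + (((N chat) ∩ T).card : ℝ) * ‖m - q‖ :=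
      cost_shift _ q m
    have m4 : Cost ((N chat) \ T) q ≤
        Cost ((N chat) \ T) chat + (((N chat) \ T).card : ℝ) * ‖chat - q‖ :=
      cost_shift _ q chat
    have m5 : ‖chat - q‖ ≤ ‖m - chat‖ + ‖m - q‖ := by
      have heq : chat - q = (m - q) - (m - chat) := by abel
      rw [heq]
      calc ‖(m - q) - (m - chat)‖ ≤ ‖m - q‖ + ‖m - chat‖ := norm_sub_le _ _
        _ = ‖m - chat‖ + ‖m - q‖ := by ring
    have m6 : Cost T chat = Cost (T ∩ N chat) chat + Cost (T \ N chat) chat :=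
      cost_split T (N chat) chat
    have m7 : Cost (N chat) chat =
        Cost (T ∩ N chat) chat + Cost ((N chat) \ T) chat := by
      have := cost_split (N chat) T chat
      rw [Finset.inter_comm (N chat) T] at this
      exact this
    have m8 : Cost (T \ N chat) chat ≤
        Cost (T \ N chat) m + ((T \ N chat).card : ℝ) * ‖m - chat‖ :=
      cost_shift _ chat m
    have m9 : Cost ((N chat) ∩ T) m + Cost (T \ N chat) m = Cost T m := by
      have := cost_split T (N chat) m
      rw [Finset.inter_comm (N chat) T]
      linarith only [this]
    have m10 : (((N chat) ∩ T).card : ℝ) + (((N chat) \ T).card : ℝ) = ((N chat).card : ℝ) := by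
      exact_mod_cast Finset.card_inter_add_card_sdiff (N chat) T
    have m11 : (((N chat) ∩ T).card : ℝ) * ‖m - q‖ + (((N chat) \ T).card : ℝ) * ‖m - q‖
        ≤ α * ε * Cost T m := by
      have : (((N chat) ∩ T).card : ℝ) * ‖m - q‖ + (((N chat) \ T).card : ℝ) * ‖m - q‖
          = ((N chat).card : ℝ) * ‖m - q‖ := by rw [← add_mul, m10]
      rw [this, hqm_rev]
      exact le_trans (mul_le_mul_of_nonneg_right hν_le_T' (norm_nonneg _)) hq'
    have m12 : (((N chat) \ T).card : ℝ) * ‖m - chat‖ + ((T \ N chat).card : ℝ) * ‖m - chat‖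
        ≤ 2 * α * (Xt.card : ℝ) * ‖m - chat‖ := by
      have h := mul_le_mul_of_nonneg_right
        (show (((N chat) \ T).card : ℝ) + ((T \ N chat).card : ℝ) ≤ 2 * α * (Xt.card : ℝ) by
          linarith only [ht, hk]) hu0
      linarith only [h]
    have m4' : Cost ((N chat) \ T) q ≤ Cost ((N chat) \ T) chat
        + (((N chat) \ T).card : ℝ) * ‖m - chat‖ + (((N chat) \ T).card : ℝ) * ‖m - q‖ := by
      have hcard0 : (0:ℝ) ≤ (((N chat) \ T).card : ℝ) := by positivity
      have h := mul_le_mul_of_nonneg_left m5 hcard0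
      linarith only [m4, h]
    linarith only [m1, m2, m3, m4', m6, m7, m8, m9, m11, m12]
  -- Xs decomposition
  have x1 : Cost Xs chat = Cost T chat + Cost (Xs \ T) chat := by
    have := cost_split Xs T chat
    rwa [Finset.inter_eq_right.mpr hTXs] at this
  have x1' : Cost Xs cstar = Cost T cstar + Cost (Xs \ T) cstar := by
    have := cost_split Xs T cstar
    rwa [Finset.inter_eq_right.mpr hTXs] at this
  have x2 : Cost (Xs \ T) chat ≤
      Cost (Xs \ T) cstar + ((Xs \ T).card : ℝ) * ‖cstar - chat‖ :=
    cost_shift _ chat cstar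
  have x4 : ((Xs \ T).card : ℝ) ≤ α * (Xs.card : ℝ) := by
    have h1 : ((Xs \ T).card : ℝ) + ((Xs ∩ T).card : ℝ) = (Xs.card : ℝ) := by
      exact_mod_cast Finset.card_sdiff_add_card_inter Xs T
    have h2 : Xs ∩ T = T := Finset.inter_eq_right.mpr hTXs
    rw [h2] at h1
    linarith only [h1, hτ2]
  have x5 : ((Xs \ T).card : ℝ) * ‖cstar - chat‖ ≤ α * ((Xs.card : ℝ) * ‖cstar - chat‖) := by
    have h := mul_le_mul_of_nonneg_right x4 hv0
    linarith only [h]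
  -- final assembly
  set Bm := Cost T m with hBmdef
  set B := Cost T cstar with hBdef
  set O := Cost Xs cstar with hOdef
  set u := ‖m - chat‖ with hudef
  set v := ‖cstar - chat‖ with hvdef
  set n := (Xt.card : ℝ) with hndef
  set ns := (Xs.card : ℝ) with hnsdef
  have F1 : Cost Xs chat ≤ Bm + α * ε * Bm + 2 * α * (n * u) + (O - B) + α * (ns * v) := by
    have hX : Cost (Xs \ T) cstar = O - B := by rw [hOdef, hBdef]; linarith only [x1']
    linarith only [x1, hTchat, x2, hX, x5]
  have F4 : (1 - α) * ns ≤ n := le_trans hτ2 hτn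
  have hO0 : 0 ≤ O := cost_nonneg _ _
  have hBO' : B ≤ O := hBO
  -- reduce goal to a polynomial inequality
  have hD : (0:ℝ) < (1 - α) * (1 - 2 * α) := mul_pos hα1 hα2
  have goal' : Cost Xs chat * ((1 - α) * (1 - 2 * α)) ≤
      ((1 - α) * (1 - 2 * α) + (6 * α - 4 * α ^ 2 + ε * α)) * O := by
    have Q1 : 2 * α * (1 - α) * ((1 - 2 * α) * n * u) ≤
        2 * α * (1 - α) * ((2 + α * ε) * Bm) :=
      mul_le_mul_of_nonneg_left hδm (by positivity)
    have Q2 : α * ((1 - 2 * α) * n * v) ≤ α * ((2 + α * ε) * B) :=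
      mul_le_mul_of_nonneg_left hδs hα0
    have Q3 : (α * (1 - 2 * α)) * ((1 - α) * ns * v) ≤ (α * (1 - 2 * α)) * (n * v) := by
      refine mul_le_mul_of_nonneg_left ?_ (by positivity)
      exact mul_le_mul_of_nonneg_right F4 hv0
    have Q4 : α * ε * ((1 - α) * (1 - 2 * α)) * Bm ≤ α * ε * ((1 - α) * (1 - 2 * α)) * B :=
      mul_le_mul_of_nonneg_left hBmB (by positivity)
    have Q5 : ((1 - α) * (1 - 2 * α)) * Bm ≤ ((1 - α) * (1 - 2 * α)) * B :=
      mul_le_mul_of_nonneg_left hBmB (by positivity)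
    have Q6 : (2 * α * (1 - α) * (2 + α * ε)) * Bm ≤ (2 * α * (1 - α) * (2 + α * ε)) * B :=
      mul_le_mul_of_nonneg_left hBmB (by positivity)
    have Q7 : (6 * α - 4 * α ^ 2 + ε * α) * B ≤ (6 * α - 4 * α ^ 2 + ε * α) * O :=
      mul_le_mul_of_nonneg_left hBO' (by
        have h := mul_le_mul_of_nonneg_left hα.le hα0
        have h2 := mul_nonneg hε0.le hα0
        linarith only [h, h2, hα0])
    have G1 : Cost Xs chat * ((1 - α) * (1 - 2 * α)) ≤
        (Bm + α * ε * Bm + 2 * α * (n * u) + (O - B) + α * (ns * v)) *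
          ((1 - α) * (1 - 2 * α)) :=
      mul_le_mul_of_nonneg_right F1 hD.le
    linarith only [G1, Q1, Q2, Q3, Q4, Q5, Q6, Q7]
  calc Cost Xs chat
      = Cost Xs chat * ((1 - α) * (1 - 2 * α)) / ((1 - α) * (1 - 2 * α)) := by
        exact (mul_div_cancel_right₀ _ hD.ne').symm
    _ ≤ ((1 - α) * (1 - 2 * α) + (6 * α - 4 * α ^ 2 + ε * α)) * O / ((1 - α) * (1 - 2 * α)) := by
        exact (div_le_div_iff_of_pos_right hD).mpr goal'
    _ = (1 + (6 * α - 4 * α ^ 2 + ε * α) / ((1 - α) * (1 - 2 * α))) * O := by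
        rw [div_eq_iff hD.ne']
        have hE : (6 * α - 4 * α ^ 2 + ε * α) / ((1 - α) * (1 - 2 * α)) * ((1 - α) * (1 - 2 * α))
            = 6 * α - 4 * α ^ 2 + ε * α := div_mul_cancel₀ _ hD.ne'
        linear_combination (-O) * hE
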